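/- Let H be a normal subgroup of a paratopological group G whose group reflexion G♭ is Hausdorff. Then the quotient paratopological group G/H is ♭-separated (i.e., the group reflexion of G/H is Hausdorff) if and only if H is closed in G♭. -/

import Mathlib

open Topology
/-- The group reflexion topology `τ♭`: the strongest group topology on `G` weaker than `τ`. -/
def flatTop (G : Type*) [Group G] (τ : TopologicalSpace G) : TopologicalSpace G :=
  sInf {t : TopologicalSpace G | τ ≤ t ∧ @IsTopologicalGroup G t _}

theorem flatTop_le_self {G : Type*} [Group G] (τ : TopologicalSpace G) : τ ≤ flatTop G τ :=
  le_sInf fun _ ht => ht.1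

theorem flatTop_topologicalGroup {G : Type*} [Group G] (τ : TopologicalSpace G) :
    @IsTopologicalGroup G (flatTop G τ) _ :=
  topologicalGroup_sInf fun _ ht => ht.2

theorem quot_group_top {G : Type*} [Group G] (t : TopologicalSpace G)
    (hg : @IsTopologicalGroup G t _) (H : Subgroup G) [H.Normal] :
    @IsTopologicalGroup (G ⧸ H) (t.coinduced (QuotientGroup.mk : G → G ⧸ H)) _ := by
  letI := t
  haveI := hg
  exact QuotientGroup.instIsTopologicalGroup H

/-- `flatTop` of the quotient topology is the quotient of `flatTop`. -/
theorem flatTop_quotient {G : Type*} [Group G] (τ : TopologicalSpace G) (H : Subgroup G)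
    [H.Normal] :
    flatTop (G ⧸ H) (τ.coinduced (QuotientGroup.mk : G → G ⧸ H)) =
      (flatTop G τ).coinduced (QuotientGroup.mk : G → G ⧸ H) := by
  apply le_antisymm
  · exact sInf_le ⟨coinduced_mono (flatTop_le_self τ),
      quot_group_top _ (flatTop_topologicalGroup τ) H⟩
  · rw [coinduced_le_iff_le_induced]
    set s := flatTop (G ⧸ H) (τ.coinduced (QuotientGroup.mk : G → G ⧸ H)) with hs
    apply sInf_le
    constructor
    · rw [← coinduced_le_iff_le_induced]
      exact flatTop_le_self _
    · letI := s
      haveI : @IsTopologicalGroup (G ⧸ H) s _ := flatTop_topologicalGroup _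
      exact topologicalGroup_induced (QuotientGroup.mk' H)

/-- Let `H` be a normal subgroup of a paratopological group `G` whose group reflexion `G♭`
is Hausdorff.  Then the quotient paratopological group `G/H` is ♭-separated (its group
reflexion is Hausdorff) if and only if `H` is closed in `G♭`. -/
theorem stmt_9 {G : Type*} [Group G] [τ : TopologicalSpace G] [ContinuousMul G]
    (H : Subgroup G) [H.Normal] (hsep : @T2Space G (flatTop G τ)) :
    @T2Space (G ⧸ H) (flatTop (G ⧸ H) (inferInstance : TopologicalSpace (G ⧸ H))) ↔
      IsClosed[flatTop G τ] (H : Set G) := by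
  have hq : (inferInstance : TopologicalSpace (G ⧸ H)) =
      τ.coinduced (QuotientGroup.mk : G → G ⧸ H) := rfl
  rw [hq, flatTop_quotient τ H]
  set τb := flatTop G τ with hτb
  constructor
  · intro ht2
    haveI := ht2
    have h1 : IsClosed[τb.coinduced (QuotientGroup.mk : G → G ⧸ H)] {(1 : G ⧸ H)} :=
      @isClosed_singleton _ _ (@T2Space.t1Space _ _ ht2) _
    have := @IsClosed.preimage G (G ⧸ H) τb (τb.coinduced _) QuotientGroup.mk
      continuous_coinduced_rng _ h1
    convert this using 1
    ext x
    simp [QuotientGroup.eq_one_iff]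
  · intro hcl
    letI := τb
    haveI : IsTopologicalGroup G := flatTop_topologicalGroup τ
    haveI : IsClosed (H : Set G) := hcl
    haveI : T3Space (G ⧸ H) := QuotientGroup.instT3Space H
    exact inferInstance
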